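/- Let T > 0, α₀ ≥ 0 and α₁ ≤ 0. Suppose U, V : [0,1] × [0,T] → ℝ are continuously differentiable and satisfy the first order hyperbolic system ∂ₜU + ∂ₓV = 0 and ∂ₜV + ∂ₓU = 0 on [0,1] × [0,T], together with the homogeneous boundary conditions U(0,t) + α₀ V(0,t) = 0 and U(1,t) + α₁ V(1,t) = 0 for all t ∈ [0,T]. Then the energy E(t) = ∫₀¹ (U(x,t)² + V(x,t)²) dx satisfies E'(t) = −2α₀ V(0,t)² + 2α₁ V(1,t)² ≤ 0 for all t ∈ (0,T); in particular E is nonincreasing. -/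

import Mathlib

open MeasureTheory

private noncomputable def pt (f : ℝ → ℝ → ℝ) (x t : ℝ) : ℝ :=
  fderiv ℝ (fun p : ℝ × ℝ => f p.1 p.2) (x, t) (0, 1)

private noncomputable def px (f : ℝ → ℝ → ℝ) (x t : ℝ) : ℝ :=
  fderiv ℝ (fun p : ℝ × ℝ => f p.1 p.2) (x, t) (1, 0)

private lemma hasDerivAt_pt (f : ℝ → ℝ → ℝ)
    (hf : Differentiable ℝ (fun p : ℝ × ℝ => f p.1 p.2)) (x t : ℝ) :
    HasDerivAt (fun s => f x s) (pt f x t) t := by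
  have h := (hf (x, t)).hasFDerivAt.comp_hasDerivAt t
    (HasDerivAt.prodMk (hasDerivAt_const t x) (hasDerivAt_id t))
  simpa [pt, Function.comp_def] using h

private lemma hasDerivAt_px (f : ℝ → ℝ → ℝ)
    (hf : Differentiable ℝ (fun p : ℝ × ℝ => f p.1 p.2)) (x t : ℝ) :
    HasDerivAt (fun y => f y t) (px f x t) x := by
  have h := (hf (x, t)).hasFDerivAt.comp_hasDerivAt x
    (HasDerivAt.prodMk (hasDerivAt_id x) (hasDerivAt_const x t))
  simpa [px, Function.comp_def] using h

private lemma continuous_pt (f : ℝ → ℝ → ℝ)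
    (hf : ContDiff ℝ 1 (fun p : ℝ × ℝ => f p.1 p.2)) :
    Continuous fun p : ℝ × ℝ => pt f p.1 p.2 :=
  (hf.continuous_fderiv one_ne_zero).clm_apply continuous_const

private lemma continuous_px (f : ℝ → ℝ → ℝ)
    (hf : ContDiff ℝ 1 (fun p : ℝ × ℝ => f p.1 p.2)) :
    Continuous fun p : ℝ × ℝ => px f p.1 p.2 :=
  (hf.continuous_fderiv one_ne_zero).clm_apply continuous_const

theorem stmt_2 (T : ℝ) (hT : 0 < T) (α₀ α₁ : ℝ) (hα₀ : 0 ≤ α₀) (hα₁ : α₁ ≤ 0)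
    (U V : ℝ → ℝ → ℝ)
    (hU : ContDiff ℝ 1 (fun p : ℝ × ℝ => U p.1 p.2))
    (hV : ContDiff ℝ 1 (fun p : ℝ × ℝ => V p.1 p.2))
    (hPDE1 : ∀ x ∈ Set.Icc (0:ℝ) 1, ∀ t ∈ Set.Icc 0 T,
      deriv (fun s => U x s) t + deriv (fun y => V y t) x = 0)
    (hPDE2 : ∀ x ∈ Set.Icc (0:ℝ) 1, ∀ t ∈ Set.Icc 0 T,
      deriv (fun s => V x s) t + deriv (fun y => U y t) x = 0)
    (hbc0 : ∀ t ∈ Set.Icc (0:ℝ) T, U 0 t + α₀ * V 0 t = 0)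
    (hbc1 : ∀ t ∈ Set.Icc (0:ℝ) T, U 1 t + α₁ * V 1 t = 0) :
    (∀ t ∈ Set.Ioo (0:ℝ) T,
      HasDerivAt (fun s => ∫ x in (0:ℝ)..1, ((U x s)^2 + (V x s)^2))
        (-2*α₀*(V 0 t)^2 + 2*α₁*(V 1 t)^2) t ∧
      -2*α₀*(V 0 t)^2 + 2*α₁*(V 1 t)^2 ≤ 0) ∧
    AntitoneOn (fun t => ∫ x in (0:ℝ)..1, ((U x t)^2 + (V x t)^2))
      (Set.Icc 0 T) := by
  have hUd : Differentiable ℝ (fun p : ℝ × ℝ => U p.1 p.2) := hU.differentiable one_ne_zero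
  have hVd : Differentiable ℝ (fun p : ℝ × ℝ => V p.1 p.2) := hV.differentiable one_ne_zero
  have hUc : Continuous fun p : ℝ × ℝ => U p.1 p.2 := hU.continuous
  have hVc : Continuous fun p : ℝ × ℝ => V p.1 p.2 := hV.continuous
  -- the t-derivative of the integrand
  set F' : ℝ → ℝ → ℝ := fun s x =>
    2 * U x s ^ 1 * pt U x s + 2 * V x s ^ 1 * pt V x s with hF'def
  have hF'c : Continuous fun p : ℝ × ℝ => F' p.2 p.1 := by
    apply Continuous.add
    · exact (continuous_const.mul (hUc.pow 1)).mul (continuous_pt U hU)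
    · exact (continuous_const.mul (hVc.pow 1)).mul (continuous_pt V hV)
  have hdiff : ∀ x s : ℝ,
      HasDerivAt (fun s => (U x s) ^ 2 + (V x s) ^ 2) (F' s x) s := fun x s =>
    ((hasDerivAt_pt U hUd x s).pow 2).add ((hasDerivAt_pt V hVd x s).pow 2)
  -- key derivative fact
  have key : ∀ t₀ ∈ Set.Ioo (0:ℝ) T,
      HasDerivAt (fun s => ∫ x in (0:ℝ)..1, ((U x s)^2 + (V x s)^2))
        (-2*α₀*(V 0 t₀)^2 + 2*α₁*(V 1 t₀)^2) t₀ := by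
    intro t₀ ht₀
    -- bound for the derivative on a compact slab
    obtain ⟨C, hC⟩ : ∃ C, ∀ p ∈ (Set.uIcc (0:ℝ) 1 ×ˢ Metric.closedBall t₀ 1),
        ‖F' p.2 p.1‖ ≤ C := by
      have hK : IsCompact (Set.uIcc (0:ℝ) 1 ×ˢ Metric.closedBall t₀ 1) :=
        isCompact_uIcc.prod (isCompact_closedBall t₀ 1)
      exact hK.exists_bound_of_continuousOn hF'c.continuousOn
    have main := intervalIntegral.hasDerivAt_integral_of_dominated_loc_of_deriv_le
      (F := fun s x => (U x s) ^ 2 + (V x s) ^ 2) (F' := F')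
      (μ := volume) (a := (0:ℝ)) (b := 1) (x₀ := t₀) (bound := fun _ => C) (s := Metric.ball t₀ 1) (Metric.ball_mem_nhds t₀ one_pos)
      (Filter.Eventually.of_forall fun s =>
        ((hUc.comp (continuous_id.prodMk continuous_const)).pow 2 |>.add
          ((hVc.comp (continuous_id.prodMk continuous_const)).pow 2)).aestronglyMeasurable)
      (((hUc.comp (continuous_id.prodMk continuous_const)).pow 2 |>.add
          ((hVc.comp (continuous_id.prodMk continuous_const)).pow 2)).intervalIntegrable 0 1)
      ((hF'c.comp (continuous_id.prodMk continuous_const)).aestronglyMeasurable)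
      (Filter.Eventually.of_forall fun x hx s hs =>
        hC (x, s) ⟨Set.Ioc_subset_Icc_self.trans Set.Icc_subset_uIcc (by
          simpa [Set.uIoc_of_le (by norm_num : (0:ℝ) ≤ 1)] using hx),
          Metric.ball_subset_closedBall hs⟩)
      (intervalIntegrable_const)
      (Filter.Eventually.of_forall fun x _ s _ => hdiff x s)
    have hD := main.2
    -- rewrite the integral of F' t₀ via FTC
    have hPtU : ∀ x ∈ Set.Icc (0:ℝ) 1, pt U x t₀ = -px V x t₀ := by
      intro x hx
      have h1 := hPDE1 x hx t₀ (Set.mem_Icc.2 ⟨le_of_lt ht₀.1, le_of_lt ht₀.2⟩)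
      rw [(hasDerivAt_pt U hUd x t₀).deriv, (hasDerivAt_px V hVd x t₀).deriv] at h1
      linarith
    have hPtV : ∀ x ∈ Set.Icc (0:ℝ) 1, pt V x t₀ = -px U x t₀ := by
      intro x hx
      have h1 := hPDE2 x hx t₀ (Set.mem_Icc.2 ⟨le_of_lt ht₀.1, le_of_lt ht₀.2⟩)
      rw [(hasDerivAt_pt V hVd x t₀).deriv, (hasDerivAt_px U hUd x t₀).deriv] at h1
      linarith
    set g : ℝ → ℝ := fun x => -(2 * U x t₀ * V x t₀) with hgdef
    set g' : ℝ → ℝ := fun x =>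
      -(2 * (px U x t₀ * V x t₀ + U x t₀ * px V x t₀)) with hg'def
    have hgderiv : ∀ x : ℝ, HasDerivAt g (g' x) x := by
      intro x
      have h := (((hasDerivAt_px U hUd x t₀).const_mul 2).mul
        (hasDerivAt_px V hVd x t₀)).neg
      refine h.congr_deriv ?_
      show _ = -(2 * (px U x t₀ * V x t₀ + U x t₀ * px V x t₀)); ring
    have hg'c : Continuous g' := by
      rw [hg'def]
      apply Continuous.neg
      apply continuous_const.mul
      exact ((((continuous_px U hU).comp (continuous_id.prodMk continuous_const)).mul
        (hVc.comp (continuous_id.prodMk continuous_const))).add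
        ((hUc.comp (continuous_id.prodMk continuous_const)).mul
          ((continuous_px V hV).comp (continuous_id.prodMk continuous_const))))
    have heq : Set.EqOn (F' t₀) g' (Set.uIcc (0:ℝ) 1) := by
      intro x hx
      have hx' : x ∈ Set.Icc (0:ℝ) 1 := by
        rwa [Set.uIcc_of_le (by norm_num : (0:ℝ) ≤ 1)] at hx
      simp only [hF'def, hg'def, hPtU x hx', hPtV x hx']
      ring
    have hint : ∫ x in (0:ℝ)..1, F' t₀ x = ∫ x in (0:ℝ)..1, g' x :=
      intervalIntegral.integral_congr heq
    have hFTC : ∫ x in (0:ℝ)..1, g' x = g 1 - g 0 :=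
      intervalIntegral.integral_eq_sub_of_hasDerivAt (fun x _ => hgderiv x)
        (hg'c.intervalIntegrable 0 1)
    have hbcval : g 1 - g 0 = -2*α₀*(V 0 t₀)^2 + 2*α₁*(V 1 t₀)^2 := by
      have h0 := hbc0 t₀ (Set.mem_Icc.2 ⟨le_of_lt ht₀.1, le_of_lt ht₀.2⟩)
      have h1 := hbc1 t₀ (Set.mem_Icc.2 ⟨le_of_lt ht₀.1, le_of_lt ht₀.2⟩)
      have hU0 : U 0 t₀ = -(α₀ * V 0 t₀) := by linarith
      have hU1 : U 1 t₀ = -(α₁ * V 1 t₀) := by linarith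
      simp only [hgdef, hU0, hU1]
      ring
    rw [hint, hFTC, hbcval] at hD
    exact hD
  constructor
  · intro t ht
    refine ⟨key t ht, ?_⟩
    have h1 : 0 ≤ α₀ * (V 0 t)^2 := mul_nonneg hα₀ (sq_nonneg _)
    have h2 : α₁ * (V 1 t)^2 ≤ 0 := mul_nonpos_of_nonpos_of_nonneg hα₁ (sq_nonneg _)
    nlinarith
  · have hcont : Continuous (fun t => ∫ x in (0:ℝ)..1, ((U x t)^2 + (V x t)^2)) := by
      apply intervalIntegral.continuous_parametric_intervalIntegral_of_continuous'
        (f := fun t x => (U x t)^2 + (V x t)^2)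
      exact ((hUc.comp (continuous_snd.prodMk continuous_fst)).pow 2).add
        ((hVc.comp (continuous_snd.prodMk continuous_fst)).pow 2)
    apply antitoneOn_of_deriv_nonpos (convex_Icc 0 T) hcont.continuousOn
    · intro t ht
      rw [interior_Icc] at ht
      exact (key t ht).differentiableAt.differentiableWithinAt
    · intro t ht
      rw [interior_Icc] at ht
      rw [(key t ht).deriv]
      have h1 : 0 ≤ α₀ * (V 0 t)^2 := mul_nonneg hα₀ (sq_nonneg _)
      have h2 : α₁ * (V 1 t)^2 ≤ 0 := mul_nonpos_of_nonpos_of_nonneg hα₁ (sq_nonneg _)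
      nlinarith
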